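/- Let G be a finite group, p a prime, H a subgroup of G, and N a normal subgroup of G. If H is a p-CAP-subgroup of G, then the image HN/N is a p-CAP-subgroup of the quotient group G/N. -/

import Mathlib

/-- `U/V` is a chief factor of `G`: both normal in `G`, `V < U`, and no normal
subgroup of `G` lies strictly between them. -/
def IsChiefFactor (G : Type*) [Group G] (V U : Subgroup G) : Prop :=
  V.Normal ∧ U.Normal ∧ V < U ∧
    ∀ W : Subgroup G, W.Normal → V < W → W < U → False

/-- `A` covers (`A ⊔ U = A ⊔ V`) or avoids (`A ⊓ U = A ⊓ V`) the factor `U/V`. -/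
def CoversOrAvoids {G : Type*} [Group G] (A V U : Subgroup G) : Prop :=
  A ⊔ U = A ⊔ V ∨ A ⊓ U = A ⊓ V

/-- `A` is a `p`-CAP-subgroup of `G`: it covers or avoids every chief factor of `G`
whose order (`V.relindex U = |U/V|`) is divisible by `p`. -/
def IsPCAPSubgroup {G : Type*} [Group G] (p : ℕ) (A : Subgroup G) : Prop :=
  ∀ V U : Subgroup G, IsChiefFactor G V U → p ∣ V.relIndex U → CoversOrAvoids A V U

/-- `A` is a strong `p`-CAP-subgroup of `G`: `A` is a `p`-CAP-subgroup of every
subgroup of `G` containing `A`. -/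
def IsStrongPCAPSubgroup {G : Type*} [Group G] (p : ℕ) (A : Subgroup G) : Prop :=
  ∀ K : Subgroup G, A ≤ K → IsPCAPSubgroup p (A.subgroupOf K)

/-- `A` is a CAP-subgroup of `G`: it covers or avoids every chief factor of `G`. -/
def IsCAPSubgroup {G : Type*} [Group G] (A : Subgroup G) : Prop :=
  ∀ V U : Subgroup G, IsChiefFactor G V U → CoversOrAvoids A V U

theorem stmt_2 {G : Type*} [Group G] [Finite G] (p : ℕ) (hp : p.Prime)
    (H : Subgroup G) (N : Subgroup G) [N.Normal]
    (hH : IsPCAPSubgroup p H) :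
    IsPCAPSubgroup p (H.map (QuotientGroup.mk' N)) := by
  intro V' U' hchief hdvd
  obtain ⟨hV'n, hU'n, hlt', hmax'⟩ := hchief
  set π := QuotientGroup.mk' N with hπ
  have hsurj : Function.Surjective π := QuotientGroup.mk'_surjective N
  have hker : π.ker = N := QuotientGroup.ker_mk' N
  set V : Subgroup G := V'.comap π with hV
  set U : Subgroup G := U'.comap π with hU
  have hcomapinj : Function.Injective (Subgroup.comap π) :=
    Subgroup.comap_injective hsurj
  have hmapV : V.map π = V' := Subgroup.map_comap_eq_self_of_surjective hsurj V'
  have hmapU : U.map π = U' := Subgroup.map_comap_eq_self_of_surjective hsurj U'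
  have hVU : V < U := by
    refine lt_of_le_of_ne (Subgroup.comap_mono hlt'.le) ?_
    intro h; exact hlt'.ne (hcomapinj h)
  have hchiefG : IsChiefFactor G V U := by
    refine ⟨hV'n.comap π, hU'n.comap π, hVU, ?_⟩
    intro W hWn hVW hWU
    have hkerW : π.ker ≤ W := by
      rw [hker]
      refine le_trans ?_ hVW.le
      intro n hn
      show (n : G ⧸ N) ∈ V'
      rw [show ((n : G) : G ⧸ N) = 1 from (QuotientGroup.eq_one_iff n).mpr hn]
      exact V'.one_mem
    have hcomapmapW : (W.map π).comap π = W := Subgroup.comap_map_eq_self hkerW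
    refine hmax' (W.map π) (hWn.map π hsurj) ?_ ?_
    · refine lt_of_le_of_ne ?_ ?_
      · rw [← hmapV]; exact Subgroup.map_mono hVW.le
      · intro h
        exact hVW.ne (by rw [← hcomapmapW, ← h, hV])
    · refine lt_of_le_of_ne ?_ ?_
      · rw [← hmapU]; exact Subgroup.map_mono hWU.le
      · intro h
        exact hWU.ne (by rw [← hcomapmapW, h, hU])
  have hrel : V.relIndex U = V'.relIndex U' := by
    rw [hV, hU, Subgroup.relIndex_comap, hmapU]
  rcases hH V U hchiefG (hrel ▸ hdvd) with hcov | havoid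
  · left
    have := congrArg (Subgroup.map π) hcov
    rwa [Subgroup.map_sup, Subgroup.map_sup, hmapV, hmapU] at this
  · right
    have key : ∀ (K' : Subgroup (G ⧸ N)), H.map π ⊓ K' = (H ⊓ K'.comap π).map π := by
      intro K'
      ext x
      constructor
      · rintro ⟨⟨h, hh, rfl⟩, hxK⟩
        exact ⟨h, ⟨hh, hxK⟩, rfl⟩
      · rintro ⟨h, ⟨hh, hhK⟩, rfl⟩
        exact ⟨⟨h, hh, rfl⟩, hhK⟩
    rw [key U', key V', ← hU, ← hV, havoid]
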